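/- arXiv:math/0205325 — 6 statements merged into one kernel-verified Lean document; each statement's English description precedes it below -/
import Mathlib

section
/- Let (M,≤_M) and (L,≤_L) be partially ordered sets, let D be a natural number such that every strictly increasing chain m_0 <_M m_1 <_M … <_M m_k in M has k ≤ D, and let ⊞: Set L → L, ⊟: L × L → L, ⊚: L → L satisfy axiom system 𝒜. Then for every function ψ: M → L there exist a natural number k ≤ D and monotone functions φ_1, …, φ_{k+1}: M → L such that for all x ∈ M, ψ(x) = ⊟(φ_1(x), ⊟(φ_2(x), …, ⊟(φ_k(x), φ_{k+1}(x))…)); in particular the number of occurrences of ⊟ in this representation is at most D. -/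
/-- The nested approximating form `⊟(φ₁, ⊟(φ₂, …, ⊟(φ_k, φ_{k+1})…))`
built from a binary operation `sub = ⊟` and `k + 1` values. -/
def nestForm {L : Type*} (sub : L → L → L) : (k : ℕ) → (Fin (k + 1) → L) → L
  | 0, φ => φ 0
  | k + 1, φ => sub (φ 0) (nestForm sub k fun i => φ i.succ)

section SAAux

variable {M L : Type*} [PartialOrder M] [PartialOrder L]

/-- Monotone majorant used in the successive approximation. -/
noncomputable def saPhi (boxplus : Set L → L) (ht : M → ℕ) (j : ℕ) (f : M → L) : M → L :=
  fun x => if ht x ≤ j then f x else boxplus (f '' {y | y ≤ x})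

open Classical in
/-- The successive residuals. -/
noncomputable def saPsi (boxplus : Set L → L) (boxminus : L → L → L) (circ : L → L)
    (hA4 : ∀ l l' : L, l ≤ l' → ∃ l'' : L, boxminus l' l'' = l ∧ circ l' ≤ l'')
    (ψ : M → L) (ht : M → ℕ) : ℕ → M → L
  | 0 => ψ
  | j + 1 => fun x =>
      if ht x ≤ j then
        circ (saPhi boxplus ht j (saPsi boxplus boxminus circ hA4 ψ ht j) x)
      else if h : saPsi boxplus boxminus circ hA4 ψ ht j x ≤
          saPhi boxplus ht j (saPsi boxplus boxminus circ hA4 ψ ht j) x then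
        (hA4 _ _ h).choose
      else ψ x

variable (boxplus : Set L → L) (boxminus : L → L → L) (circ : L → L)
    (hA4 : ∀ l l' : L, l ≤ l' → ∃ l'' : L, boxminus l' l'' = l ∧ circ l' ≤ l'')
    (ψ : M → L) (ht : M → ℕ)

lemma saPsi_le_saPhi (hA2a : ∀ (S : Set L), ∀ x ∈ S, x ≤ boxplus S) (j : ℕ) (x : M) :
    saPsi boxplus boxminus circ hA4 ψ ht j x ≤
      saPhi boxplus ht j (saPsi boxplus boxminus circ hA4 ψ ht j) x := by
  unfold saPhi
  split
  · exact le_rfl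
  · exact hA2a _ _ ⟨x, by simp, rfl⟩

lemma saPsi_sub (hA2a : ∀ (S : Set L), ∀ x ∈ S, x ≤ boxplus S)
    (hA3a : ∀ l : L, boxminus l (circ l) = l) (j : ℕ) (x : M) :
    boxminus (saPhi boxplus ht j (saPsi boxplus boxminus circ hA4 ψ ht j) x)
        (saPsi boxplus boxminus circ hA4 ψ ht (j + 1) x) =
      saPsi boxplus boxminus circ hA4 ψ ht j x ∧
    circ (saPhi boxplus ht j (saPsi boxplus boxminus circ hA4 ψ ht j) x) ≤
      saPsi boxplus boxminus circ hA4 ψ ht (j + 1) x := by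
  by_cases hx : ht x ≤ j
  · have hphi : saPhi boxplus ht j (saPsi boxplus boxminus circ hA4 ψ ht j) x =
        saPsi boxplus boxminus circ hA4 ψ ht j x := by
      unfold saPhi; rw [if_pos hx]
    have hpsi : saPsi boxplus boxminus circ hA4 ψ ht (j + 1) x =
        circ (saPhi boxplus ht j (saPsi boxplus boxminus circ hA4 ψ ht j) x) := by
      show (if ht x ≤ j then _ else _) = _
      rw [if_pos hx]
    rw [hpsi, hphi]
    exact ⟨hA3a _, le_rfl⟩
  · have h := saPsi_le_saPhi boxplus boxminus circ hA4 ψ ht hA2a j x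
    have hpsi : saPsi boxplus boxminus circ hA4 ψ ht (j + 1) x = (hA4 _ _ h).choose := by
      show (if ht x ≤ j then _ else _) = _
      rw [if_neg hx]
      rw [dif_pos h]
    rw [hpsi]
    exact (hA4 _ _ h).choose_spec

lemma saPhi_mono (hA2a : ∀ (S : Set L), ∀ x ∈ S, x ≤ boxplus S)
    (hA2b : ∀ S T : Set L, S ⊆ T → boxplus S ≤ boxplus T)
    (hA3a : ∀ l : L, boxminus l (circ l) = l)
    (hA3b : Monotone circ)
    (hmono : Monotone ht) (hstrict : ∀ x y : M, x < y → ht x < ht y) (j : ℕ) :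
    Monotone (saPhi boxplus ht j (saPsi boxplus boxminus circ hA4 ψ ht j)) := by
  induction j with
  | zero =>
    intro x y hxy
    unfold saPhi
    rcases eq_or_lt_of_le hxy with rfl | hlt
    · exact le_rfl
    · have hy : ¬ ht y ≤ 0 := by
        have := hstrict x y hlt
        omega
      rw [if_neg hy]
      split
      · exact hA2a _ _ ⟨x, hxy, rfl⟩
      · exact hA2b _ _ (Set.image_mono fun z hz => le_trans hz hxy)
  | succ i ih =>
    intro x y hxy
    unfold saPhi
    rcases eq_or_lt_of_le hxy with rfl | hlt
    · exact le_rfl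
    by_cases hy : ht y ≤ i + 1
    · have hx : ht x ≤ i := by have := hstrict x y hlt; omega
      rw [if_pos (by omega : ht x ≤ i + 1), if_pos hy]
      -- ψ_{i+1} x = circ (φ_i x) ≤ circ (φ_i y) ≤ ψ_{i+1} y
      have hpx : saPsi boxplus boxminus circ hA4 ψ ht (i + 1) x =
          circ (saPhi boxplus ht i (saPsi boxplus boxminus circ hA4 ψ ht i) x) := by
        show (if ht x ≤ i then _ else _) = _
        rw [if_pos hx]
      have hpy := (saPsi_sub boxplus boxminus circ hA4 ψ ht hA2a hA3a i y).2
      calc saPsi boxplus boxminus circ hA4 ψ ht (i + 1) x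
          = circ (saPhi boxplus ht i (saPsi boxplus boxminus circ hA4 ψ ht i) x) := hpx
        _ ≤ circ (saPhi boxplus ht i (saPsi boxplus boxminus circ hA4 ψ ht i) y) :=
            hA3b (ih hxy)
        _ ≤ saPsi boxplus boxminus circ hA4 ψ ht (i + 1) y := hpy
    · rw [if_neg hy]
      split
      · exact hA2a _ _ ⟨x, hxy, rfl⟩
      · exact hA2b _ _ (Set.image_mono fun z hz => le_trans hz hxy)

end SAAux

/-- Theorem 1: under axiom system 𝒜 and the bound `D` on lengths of strictly
increasing chains in `M`, every `ψ : M → L` has a representation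
`ψ = ⊟(φ₁, ⊟(φ₂, …, ⊟(φ_k, φ_{k+1})…))` with all `φᵢ` monotone and `k ≤ D`. -/
theorem successive_approximation_A
    {M L : Type*} [PartialOrder M] [PartialOrder L]
    (D : ℕ)
    (hChain : ∀ (k : ℕ) (c : Fin (k + 1) → M), StrictMono c → k ≤ D)
    (boxplus : Set L → L) (boxminus : L → L → L) (circ : L → L)
    (hA2a : ∀ (S : Set L), ∀ x ∈ S, x ≤ boxplus S)
    (hA2b : ∀ S T : Set L, S ⊆ T → boxplus S ≤ boxplus T)
    (hA3a : ∀ l : L, boxminus l (circ l) = l)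
    (hA3b : Monotone circ)
    (hA4 : ∀ l l' : L, l ≤ l' → ∃ l'' : L, boxminus l' l'' = l ∧ circ l' ≤ l'')
    (ψ : M → L) :
    ∃ k ≤ D, ∃ φ : Fin (k + 1) → (M → L),
      (∀ i, Monotone (φ i)) ∧
        ∀ x : M, ψ x = nestForm boxminus k (fun i => φ i x) := by
  -- the height function
  have hheight : ∀ x : M, Order.height x ≤ (D : ℕ∞) := by
    intro x
    apply Order.height_le
    intro p hp
    exact_mod_cast hChain p.length p.toFun p.strictMono
  set ht : M → ℕ := fun x => (Order.height x).toNat with hht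
  have htop : ∀ x : M, Order.height x ≠ ⊤ :=
    fun x => ne_top_of_le_ne_top (by simp) (hheight x)
  have htD : ∀ x : M, ht x ≤ D := fun x => ENat.toNat_le_of_le_coe (hheight x)
  have hmono : Monotone ht := by
    intro x y hxy
    exact ENat.toNat_le_toNat (Order.height_mono hxy) (htop y)
  have hstrict : ∀ x y : M, x < y → ht x < ht y := by
    intro x y hxy
    have h1 : Order.height x < Order.height y :=
      Order.height_strictMono hxy (lt_top_iff_ne_top.mpr (htop x))
    rw [← ENat.coe_toNat (htop x), ← ENat.coe_toNat (htop y)] at h1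
    exact_mod_cast h1
  refine ⟨D, le_rfl,
    fun i => saPhi boxplus ht i.val (saPsi boxplus boxminus circ hA4 ψ ht i.val),
    fun i => saPhi_mono boxplus boxminus circ hA4 ψ ht hA2a hA2b hA3a hA3b hmono hstrict i.val,
    ?_⟩
  intro x
  -- general nesting identity
  have key : ∀ n j : ℕ, j + n = D →
      nestForm boxminus n
        (fun i : Fin (n + 1) =>
          saPhi boxplus ht (j + i.val) (saPsi boxplus boxminus circ hA4 ψ ht (j + i.val)) x) =
      saPsi boxplus boxminus circ hA4 ψ ht j x := by
    intro n
    induction n with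
    | zero =>
      intro j hj
      show saPhi boxplus ht (j + 0) (saPsi boxplus boxminus circ hA4 ψ ht (j + 0)) x = _
      have hx : ht x ≤ j + 0 := by have := htD x; omega
      unfold saPhi
      rw [if_pos hx, Nat.add_zero]
    | succ n ih =>
      intro j hj
      show boxminus
          (saPhi boxplus ht (j + 0) (saPsi boxplus boxminus circ hA4 ψ ht (j + 0)) x)
          (nestForm boxminus n (fun i : Fin (n + 1) =>
            saPhi boxplus ht (j + (i.val + 1))
              (saPsi boxplus boxminus circ hA4 ψ ht (j + (i.val + 1))) x)) = _
      have harg : (fun i : Fin (n + 1) =>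
            saPhi boxplus ht (j + (i.val + 1))
              (saPsi boxplus boxminus circ hA4 ψ ht (j + (i.val + 1))) x) =
          (fun i : Fin (n + 1) =>
            saPhi boxplus ht ((j + 1) + i.val)
              (saPsi boxplus boxminus circ hA4 ψ ht ((j + 1) + i.val)) x) := by
        funext i
        have he : j + (i.val + 1) = (j + 1) + i.val := by omega
        rw [he]
      rw [harg, ih (j + 1) (by omega)]
      simpa using (saPsi_sub boxplus boxminus circ hA4 ψ ht hA2a hA3a j x).1
  have := key D 0 (by omega)
  simp only [Nat.zero_add] at this
  exact this.symm
end

section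
/- Let (M,≤_M) and (L,≤_L) be partially ordered sets, let D be a natural number such that every strictly increasing chain m_0 <_M m_1 <_M … <_M m_k in M has k ≤ D, and let ⊞: Set L → L, ⊟: L × L → L, ⊚: L → L satisfy axiom system 𝒜. Then for every function ψ: M → L there exist monotone functions φ_1, …, φ_{D+1}: M → L (exactly D+1 of them) such that for all x ∈ M, ψ(x) = ⊟(φ_1(x), ⊟(φ_2(x), …, ⊟(φ_D(x), φ_{D+1}(x))…)), i.e. ψ is given by the universal nested form with exactly D occurrences of ⊟. -/
section Aux

variable {M : Type*} [PartialOrder M]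

/-- Lengths of strictly increasing chains ending at `x`. -/
def chainSet (x : M) : Set ℕ :=
  {k | ∃ c : Fin (k + 1) → M, StrictMono c ∧ c (Fin.last k) = x}

/-- Rank of `x` : the longest strictly increasing chain ending at `x`. -/
noncomputable def rnk (x : M) : ℕ := sSup (chainSet x)

lemma zero_mem_chainSet (x : M) : 0 ∈ chainSet x := by
  refine ⟨fun _ => x, ?_, rfl⟩
  intro i j hij
  exfalso
  have hi := i.isLt
  have hj := j.isLt
  have := Fin.lt_def.mp hij
  omega

lemma chainSet_bdd (D : ℕ)
    (hChain : ∀ (k : ℕ) (c : Fin (k + 1) → M), StrictMono c → k ≤ D)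
    (x : M) : BddAbove (chainSet x) := by
  refine ⟨D, fun k hk => ?_⟩
  obtain ⟨c, hc, -⟩ := hk
  exact hChain k c hc

lemma rnk_le (D : ℕ)
    (hChain : ∀ (k : ℕ) (c : Fin (k + 1) → M), StrictMono c → k ≤ D)
    (x : M) : rnk x ≤ D :=
  csSup_le ⟨0, zero_mem_chainSet x⟩ (fun k hk => by
    obtain ⟨c, hc, -⟩ := hk; exact hChain k c hc)

lemma rnk_mem (D : ℕ)
    (hChain : ∀ (k : ℕ) (c : Fin (k + 1) → M), StrictMono c → k ≤ D)
    (x : M) : rnk x ∈ chainSet x :=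
  Nat.sSup_mem ⟨0, zero_mem_chainSet x⟩ (chainSet_bdd D hChain x)

lemma rnk_strictMono (D : ℕ)
    (hChain : ∀ (k : ℕ) (c : Fin (k + 1) → M), StrictMono c → k ≤ D)
    {x y : M} (hxy : x < y) : rnk x < rnk y := by
  obtain ⟨c, hc, hcx⟩ := rnk_mem D hChain x
  have hmem : rnk x + 1 ∈ chainSet y := by
    refine ⟨fun i => if h : i.val ≤ rnk x then c ⟨i.val, by omega⟩ else y, ?_, ?_⟩
    · intro i j hij
      have hij' : i.val < j.val := Fin.lt_def.mp hij
      have hi := i.isLt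
      have hj := j.isLt
      by_cases h1 : i.val ≤ rnk x
      · by_cases h2 : j.val ≤ rnk x
        · simp only [dif_pos h1, dif_pos h2]
          exact hc (Fin.mk_lt_mk.mpr hij')
        · simp only [dif_pos h1, dif_neg h2]
          have hle : c ⟨i.val, by omega⟩ ≤ c (Fin.last (rnk x)) :=
            hc.monotone (by simp [Fin.le_def, Fin.last]; omega)
          rw [hcx] at hle
          exact lt_of_le_of_lt hle hxy
      · have h2 : ¬ j.val ≤ rnk x := by omega
        omega
    · have hlast : ¬ (Fin.last (rnk x + 1)).val ≤ rnk x := by simp [Fin.last]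
      simp only [dif_neg hlast]
  have h2 : rnk x + 1 ≤ rnk y := le_csSup (chainSet_bdd D hChain y) hmem
  omega

lemma rnk_mono (D : ℕ)
    (hChain : ∀ (k : ℕ) (c : Fin (k + 1) → M), StrictMono c → k ≤ D)
    {x y : M} (hxy : x ≤ y) : rnk x ≤ rnk y := by
  rcases eq_or_lt_of_le hxy with rfl | h
  · exact le_rfl
  · exact (rnk_strictMono D hChain h).le

variable {L : Type*} [PartialOrder L]

/-- One peeling step: from a `k`-monotone `ψ` extract a monotone `φ` and a
`(k+1)`-monotone remainder `ψ'` with `ψ = ⊟(φ, ψ')`. -/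
lemma step_lemma (D : ℕ)
    (hChain : ∀ (k : ℕ) (c : Fin (k + 1) → M), StrictMono c → k ≤ D)
    (boxplus : Set L → L) (boxminus : L → L → L) (circ : L → L)
    (hA2a : ∀ (S : Set L), ∀ x ∈ S, x ≤ boxplus S)
    (hA2b : ∀ S T : Set L, S ⊆ T → boxplus S ≤ boxplus T)
    (hA3a : ∀ l : L, boxminus l (circ l) = l)
    (hA3b : Monotone circ)
    (hA4 : ∀ l l' : L, l ≤ l' → ∃ l'' : L, boxminus l' l'' = l ∧ circ l' ≤ l'')
    (k : ℕ) (ψ : M → L)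
    (hψ : ∀ x y : M, x ≤ y → rnk x < k → ψ x ≤ ψ y) :
    ∃ φ ψ' : M → L, Monotone φ ∧
      (∀ x y : M, x ≤ y → rnk x < k + 1 → ψ' x ≤ ψ' y) ∧
      (∀ x, boxminus (φ x) (ψ' x) = ψ x) := by
  classical
  set φ : M → L := fun x => if rnk x ≤ k then ψ x else boxplus (ψ '' {y | y ≤ x}) with hφdef
  have hle : ∀ x, ψ x ≤ φ x := by
    intro x
    by_cases h : rnk x ≤ k
    · simp [hφdef, h]
    · simpa [hφdef, h] using hA2a (ψ '' {y | y ≤ x}) (ψ x) ⟨x, le_rfl, rfl⟩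
  have hφeq : ∀ x, rnk x ≤ k → φ x = ψ x := by
    intro x h; simp [hφdef, h]
  have hφmono : Monotone φ := by
    intro x y hxy
    by_cases hy : rnk y ≤ k
    · have hx : rnk x ≤ k := le_trans (rnk_mono D hChain hxy) hy
      rw [hφeq x hx, hφeq y hy]
      rcases eq_or_lt_of_le hxy with rfl | h
      · exact le_rfl
      · exact hψ x y hxy (lt_of_lt_of_le (rnk_strictMono D hChain h) hy)
    · by_cases hx : rnk x ≤ k
      · rw [hφeq x hx]
        calc ψ x ≤ boxplus (ψ '' {z | z ≤ y}) := hA2a _ _ ⟨x, hxy, rfl⟩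
          _ = φ y := by simp [hφdef, hy]
      · simp only [hφdef, if_neg hx, if_neg hy]
        exact hA2b _ _ (Set.image_mono (fun z hz => le_trans hz hxy))
  -- choose the remainder
  have h4 : ∀ x, ∃ l'', boxminus (φ x) l'' = ψ x ∧ circ (φ x) ≤ l'' := fun x =>
    hA4 (ψ x) (φ x) (hle x)
  choose g hg1 hg2 using h4
  set ψ' : M → L := fun x => if rnk x ≤ k then circ (φ x) else g x with hψ'def
  have hcirc_le : ∀ x, circ (φ x) ≤ ψ' x := by
    intro x
    by_cases h : rnk x ≤ k
    · simp [hψ'def, h]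
    · simpa [hψ'def, h] using hg2 x
  refine ⟨φ, ψ', hφmono, ?_, ?_⟩
  · intro x y hxy hrx
    have hx : rnk x ≤ k := by omega
    calc ψ' x = circ (φ x) := by simp [hψ'def, hx]
      _ ≤ circ (φ y) := hA3b (hφmono hxy)
      _ ≤ ψ' y := hcirc_le y
  · intro x
    by_cases h : rnk x ≤ k
    · simp only [hψ'def, if_pos h]
      rw [hA3a (φ x), hφeq x h]
    · simp only [hψ'def, if_neg h]
      exact hg1 x

lemma aux_lemma (D : ℕ)
    (hChain : ∀ (k : ℕ) (c : Fin (k + 1) → M), StrictMono c → k ≤ D)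
    (boxplus : Set L → L) (boxminus : L → L → L) (circ : L → L)
    (hA2a : ∀ (S : Set L), ∀ x ∈ S, x ≤ boxplus S)
    (hA2b : ∀ S T : Set L, S ⊆ T → boxplus S ≤ boxplus T)
    (hA3a : ∀ l : L, boxminus l (circ l) = l)
    (hA3b : Monotone circ)
    (hA4 : ∀ l l' : L, l ≤ l' → ∃ l'' : L, boxminus l' l'' = l ∧ circ l' ≤ l'')
    (n : ℕ) :
    ∀ ψ : M → L, (∀ x y : M, x ≤ y → rnk x < D - n → ψ x ≤ ψ y) →
    ∃ φ : Fin (n + 1) → (M → L),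
      (∀ i, Monotone (φ i)) ∧
        ∀ x : M, ψ x = nestForm boxminus n (fun i => φ i x) := by
  induction n with
  | zero =>
    intro ψ hψ
    refine ⟨fun _ => ψ, fun _ => ?_, fun x => rfl⟩
    intro x y hxy
    rcases eq_or_lt_of_le hxy with rfl | h
    · exact le_rfl
    · refine hψ x y hxy ?_
      have h1 := rnk_strictMono D hChain h
      have h2 := rnk_le D hChain y
      omega
  | succ n ih =>
    intro ψ hψ
    obtain ⟨φ₀, ψ', hφ₀, hψ', heq⟩ :=
      step_lemma D hChain boxplus boxminus circ hA2a hA2b hA3a hA3b hA4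
        (D - (n + 1)) ψ hψ
    obtain ⟨φ', hφ'mono, hφ'eq⟩ := ih ψ' (fun x y hxy hr => hψ' x y hxy (by omega))
    refine ⟨Fin.cons φ₀ φ', ?_, ?_⟩
    · intro i
      refine Fin.cases ?_ ?_ i
      · simpa using hφ₀
      · intro j; simpa using hφ'mono j
    · intro x
      simp only [nestForm, Fin.cons_zero, Fin.cons_succ]
      rw [← hφ'eq x]
      exact (heq x).symm

end Aux

/-- Corollary 1: under axiom system 𝒜 and the bound `D` on lengths of strictly
increasing chains in `M`, every `ψ : M → L` is given by the universal nested form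
`⊟(φ₁, ⊟(φ₂, …, ⊟(φ_D, φ_{D+1})…))` with exactly `D + 1` monotone functions. -/
theorem universal_approximating_form_A
    {M L : Type*} [PartialOrder M] [PartialOrder L]
    (D : ℕ)
    (hChain : ∀ (k : ℕ) (c : Fin (k + 1) → M), StrictMono c → k ≤ D)
    (boxplus : Set L → L) (boxminus : L → L → L) (circ : L → L)
    (hA2a : ∀ (S : Set L), ∀ x ∈ S, x ≤ boxplus S)
    (hA2b : ∀ S T : Set L, S ⊆ T → boxplus S ≤ boxplus T)
    (hA3a : ∀ l : L, boxminus l (circ l) = l)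
    (hA3b : Monotone circ)
    (hA4 : ∀ l l' : L, l ≤ l' → ∃ l'' : L, boxminus l' l'' = l ∧ circ l' ≤ l'')
    (ψ : M → L) :
    ∃ φ : Fin (D + 1) → (M → L),
      (∀ i, Monotone (φ i)) ∧
        ∀ x : M, ψ x = nestForm boxminus D (fun i => φ i x) := by
  exact aux_lemma D hChain boxplus boxminus circ hA2a hA2b hA3a hA3b hA4 D ψ
    (fun x y _ hr => by omega)
end

section
/- Let (M,≤_M) and (L,≤_L) be partially ordered sets such that every strictly increasing chain m_0 <_M … <_M m_k in M has k ≤ D, and such that L has a greatest element γ. Let ⊟: L × L → L and o ∈ L satisfy: ⊟(l, o) = l for all l ∈ L, and for all l ≤_L l' there exists l'' ∈ L with ⊟(l', l'') = l and o ≤_L l''. Then for every function ψ: M → L there exist θ-functions θ_1, …, θ_{D+1}: M → L with θ_i of rank i for each i, such that for all x ∈ M, ψ(x) = ⊟(θ_1(x), ⊟(θ_2(x), …, ⊟(θ_D(x), θ_{D+1}(x))…)). -/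
/-- The stratification of a poset: `stratum 0 = M₁` is the set of minimal elements
of `M`, and `stratum n = M_{n+1}` is the set of minimal elements of
`M ∖ (M₁ ∪ … ∪ M_n)`.  An element of `stratum n` has rank `n + 1`. -/
def stratum {M : Type*} [PartialOrder M] : ℕ → Set M
  | n => {x | (∀ i, i < n → x ∉ stratum i) ∧
      ∀ y : M, (∀ i, i < n → y ∉ stratum i) → ¬y < x}

/-- Under the finiteness assumption, `stratum n` is exactly the set of elements of
`Order.height` equal to `n`. -/
lemma stratum_eq_height {M : Type*} [PartialOrder M]
    (hfin : ∀ x : M, Order.height x ≠ ⊤) (n : ℕ) :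
    stratum (M := M) n = {x | Order.height x = n} := by
  induction n using Nat.strong_induction_on with
  | _ n IH =>
    have hlow : ∀ (z : M), (∀ i, i < n → z ∉ stratum i) ↔ (n : ℕ∞) ≤ Order.height z := by
      intro z
      constructor
      · intro h
        obtain ⟨m, hm⟩ := WithTop.ne_top_iff_exists.mp (hfin z)
        by_contra hc
        push_neg at hc
        rw [← hm] at hc
        have hmn : m < n := Nat.cast_lt.mp hc
        exact h m hmn (by rw [IH m hmn]; exact hm.symm)
      · intro h i hi hz
        rw [IH i hi] at hz
        rw [hz] at h
        exact absurd (by exact_mod_cast h) (by omega)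
    rw [stratum]
    ext x
    simp only [Set.mem_setOf_eq]
    rw [hlow x]
    constructor
    · rintro ⟨h1, h2⟩
      rw [Order.height_eq_coe_iff_minimal_le_height]
      rw [minimal_iff_forall_lt]
      exact ⟨h1, fun y hy hny => h2 y ((hlow y).mpr hny) hy⟩
    · intro h
      rw [Order.height_eq_coe_iff_minimal_le_height, minimal_iff_forall_lt] at h
      exact ⟨h.1, fun y hy hyx => h.2 hyx ((hlow y).mp hy)⟩

/-- `nestForm` over a function that is `γ` below `j`, `o` above `j`. -/
lemma nestForm_eq_iterate {L : Type*} (sub : L → L → L) (γ o : L)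
    (hsub : ∀ l, sub l o = l) :
    ∀ (k j : ℕ) (hj : j ≤ k) (φ : Fin (k + 1) → L),
      (∀ i : Fin (k + 1), (i : ℕ) < j → φ i = γ) →
      (∀ i : Fin (k + 1), j < (i : ℕ) → φ i = o) →
      nestForm sub k φ = (sub γ)^[j] (φ ⟨j, by omega⟩) := by
  intro k
  induction k with
  | zero =>
    intro j hj φ h1 h2
    interval_cases j
    rfl
  | succ k IHk =>
    intro j hj φ h1 h2
    cases j with
    | zero =>
      have htail : (fun i : Fin (k + 1) => φ i.succ) = fun _ => o := by
        funext i
        exact h2 i.succ (by simp)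
      have hconst : ∀ (m : ℕ) , nestForm sub m (fun _ => o) = o := by
        intro m
        induction m with
        | zero => rfl
        | succ m ih => show sub o (nestForm sub m fun _ => o) = o; rw [ih, hsub]
      show sub (φ 0) (nestForm sub k fun i => φ i.succ) = _
      rw [htail, hconst, hsub]
      rfl
    | succ j =>
      have h0 : φ 0 = γ := h1 0 (by simp)
      have := IHk j (by omega) (fun i => φ i.succ)
        (fun i hi => h1 i.succ (by simpa using by omega))
        (fun i hi => h2 i.succ (by simpa using by omega))
      show sub (φ 0) (nestForm sub k fun i => φ i.succ) = _
      rw [h0, this, Function.iterate_succ_apply']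
      congr

/-- Theorem 2: if strictly increasing chains in `M` have length at most `D`, `L` has
a greatest element `γ`, and `⊟`, `o` satisfy the relevant parts of axiom system 𝒜,
then every `ψ : M → L` is represented by a nested form of θ-functions
`θ₁, …, θ_{D+1}` where `θ_i` has rank `i` (here `θ i`, `i : Fin (D+1)`, has rank
`i + 1`: it takes the value `o` on elements of rank `< i + 1` and the value `γ` on
elements of rank `> i + 1`). -/
theorem theta_approximating_form
    {M L : Type*} [PartialOrder M] [PartialOrder L]
    (D : ℕ)
    (hChain : ∀ (k : ℕ) (c : Fin (k + 1) → M), StrictMono c → k ≤ D)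
    (γ : L) (hγ : ∀ l : L, l ≤ γ)
    (boxminus : L → L → L) (o : L)
    (h3 : ∀ l : L, boxminus l o = l)
    (h4 : ∀ l l' : L, l ≤ l' → ∃ l'' : L, boxminus l' l'' = l ∧ o ≤ l'')
    (ψ : M → L) :
    ∃ θ : Fin (D + 1) → (M → L),
      (∀ i, Monotone (θ i)) ∧
      (∀ (i : Fin (D + 1)) (x : M) (j : ℕ), j < (i : ℕ) → x ∈ stratum j → θ i x = o) ∧
      (∀ (i : Fin (D + 1)) (x : M) (j : ℕ), (i : ℕ) < j → x ∈ stratum j → θ i x = γ) ∧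
      ∀ x : M, ψ x = nestForm boxminus D (fun i => θ i x) := by
  classical
  -- heights are bounded by `D`
  have hD : ∀ x : M, Order.height x ≤ (D : ℕ∞) := by
    intro x
    apply Order.height_le
    intro p _
    exact_mod_cast hChain p.length p.toFun p.strictMono
  have hfin : ∀ x : M, Order.height x ≠ ⊤ :=
    fun x => (lt_of_le_of_lt (hD x) (WithTop.coe_lt_top D)).ne
  -- the natural-number rank function
  set r : M → ℕ := fun x => (Order.height x).toNat with hr_def
  have hr : ∀ x : M, Order.height x = (r x : ℕ∞) :=
    fun x => (ENat.coe_toNat (hfin x)).symm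
  have hrD : ∀ x : M, r x ≤ D := by
    intro x
    have := hD x
    rw [hr x] at this
    exact_mod_cast this
  have hrmono : ∀ {x y : M}, x < y → r x < r y := by
    intro x y hxy
    have := Order.height_strictMono hxy (lt_of_le_of_lt (hD x) (WithTop.coe_lt_top D))
    rw [hr x, hr y] at this
    exact_mod_cast this
  have hstrat : ∀ (x : M) (j : ℕ), x ∈ stratum j → r x = j := by
    intro x j hx
    rw [stratum_eq_height hfin j] at hx
    have : Order.height x = (j : ℕ∞) := hx
    rw [hr x] at this
    exact_mod_cast this
  -- the peeling function obtained from `h4`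
  set peel : ℕ → L → L := fun n l =>
    Nat.rec l (fun _ prev => Classical.choose (h4 prev γ (hγ prev))) n with hpeel_def
  have hpeel_succ : ∀ (n : ℕ) (l : L),
      boxminus γ (peel (n + 1) l) = peel n l ∧ o ≤ peel (n + 1) l := by
    intro n l
    exact Classical.choose_spec (h4 (peel n l) γ (hγ (peel n l)))
  have hpeel_iter : ∀ (n : ℕ) (l : L), (boxminus γ)^[n] (peel n l) = l := by
    intro n l
    induction n with
    | zero => rfl
    | succ n ih =>
      rw [Function.iterate_succ_apply, (hpeel_succ n l).1, ih]
  -- the θ-functions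
    -- θ i x = o if rank < i, γ if rank > i, the peeled value if rank = i
  refine ⟨fun i x => if r x < (i : ℕ) then o else if (i : ℕ) < r x then γ
    else peel (r x) (ψ x), ?_, ?_, ?_, ?_⟩
  · -- monotonicity
    intro i x y hxy
    rcases eq_or_lt_of_le hxy with rfl | hlt
    · exact le_rfl
    have hrxy := hrmono hlt
    by_cases h1 : r x < (i : ℕ)
    · -- θ i x = o
      simp only [if_pos h1]
      by_cases h2 : r y < (i : ℕ)
      · simp only [if_pos h2]; exact le_rfl
      · simp only [if_neg h2]
        by_cases h3' : (i : ℕ) < r y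
        · simp only [if_pos h3']; exact le_trans (hγ o) (le_of_eq rfl)
        · simp only [if_neg h3']
          have hy1 : r y = (i : ℕ) := by omega
          have : 1 ≤ r y := by omega
          obtain ⟨m, hm⟩ := Nat.exists_eq_add_of_le this
          rw [hm]
          have := (hpeel_succ m (ψ y)).2
          simpa [Nat.add_comm] using this
    · simp only [if_neg h1]
      by_cases h2 : (i : ℕ) < r x
      · -- θ i x = γ, and i < r y too
        have h2' : (i : ℕ) < r y := by omega
        simp only [if_pos h2, if_neg (by omega : ¬ r y < (i : ℕ)), if_pos h2']
        exact le_rfl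
      · -- r x = i, so i < r y, θ i y = γ
        have h2' : (i : ℕ) < r y := by omega
        simp only [if_neg h2, if_neg (by omega : ¬ r y < (i : ℕ)), if_pos h2']
        exact hγ _
  · -- value o below rank
    intro i x j hj hx
    have := hstrat x j hx
    simp only [if_pos (by omega : r x < (i : ℕ))]
  · -- value γ above rank
    intro i x j hj hx
    have := hstrat x j hx
    simp only [if_neg (by omega : ¬ r x < (i : ℕ)), if_pos (by omega : (i : ℕ) < r x)]
  · -- the nested form
    intro x
    have hjD : r x ≤ D := hrD x
    rw [nestForm_eq_iterate boxminus γ o h3 D (r x) hjD _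
      (fun i hi => by simp only [if_neg (by omega : ¬ r x < (i : ℕ)), if_pos hi])
      (fun i hi => by simp only [if_pos hi])]
    simp only [if_neg (lt_irrefl (r x))]
    exact (hpeel_iter (r x) (ψ x)).symm
end

section
/- Let (M,≤_M) and (L,≤_L) be partially ordered sets, let D be a natural number such that every strictly decreasing chain m_0 >_M m_1 >_M … >_M m_k in M has k ≤ D, and let ⊞*: Set L → L, ⊟*: L × L → L, ⊚*: L → L satisfy the dual axiom system 𝒜*. Then for every function ψ: M → L there exist a natural number k ≤ D and monotone functions φ_1, …, φ_{k+1}: M → L such that for all x ∈ M, ψ(x) = ⊟*(φ_1(x), ⊟*(φ_2(x), …, ⊟*(φ_k(x), φ_{k+1}(x))…)); in particular the number of occurrences of ⊟* is at most D. -/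
/-- Auxiliary nested form with an explicit tail element. -/
def nestTail {L : Type*} (sub : L → L → L) : (k : ℕ) → (Fin k → L) → L → L
  | 0, _, t => t
  | k + 1, f, t => sub (f 0) (nestTail sub k (fun i => f i.succ) t)

lemma snoc_succ_eq {α : Type*} (k : ℕ) (f : Fin (k + 1) → α) (a : α) :
    (fun i : Fin (k + 1) => (Fin.snoc f a : Fin (k + 2) → α) i.succ)
      = (Fin.snoc (fun i => f i.succ) a : Fin (k + 1) → α) := by
  funext i
  refine Fin.lastCases ?_ (fun j => ?_) i
  · have h1 : (Fin.last k).succ = Fin.last (k + 1) := rfl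
    rw [h1, Fin.snoc_last, Fin.snoc_last]
  · have h1 : (Fin.castSucc j).succ = Fin.castSucc j.succ := (Fin.succ_castSucc j).symm
    rw [h1, Fin.snoc_castSucc, Fin.snoc_castSucc]

lemma nestForm_snoc {L : Type*} (sub : L → L → L) :
    ∀ (k : ℕ) (f : Fin k → L) (t : L),
      nestForm sub k (Fin.snoc f t : Fin (k + 1) → L) = nestTail sub k f t := by
  intro k
  induction k with
  | zero =>
    intro f t
    show (Fin.snoc f t : Fin 1 → L) 0 = t
    have h0 : (0 : Fin 1) = Fin.last 0 := rfl
    rw [h0, Fin.snoc_last]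
  | succ k ih =>
    intro f t
    show sub ((Fin.snoc f t : Fin (k + 2) → L) 0)
        (nestForm sub k fun i => (Fin.snoc f t : Fin (k + 2) → L) i.succ)
      = sub (f 0) (nestTail sub k (fun i => f i.succ) t)
    rw [snoc_succ_eq k f t, ih]
    have h0 : (0 : Fin (k + 2)) = Fin.castSucc (0 : Fin (k + 1)) := rfl
    rw [h0, Fin.snoc_castSucc]

lemma nestTail_snoc {L : Type*} (sub : L → L → L) :
    ∀ (k : ℕ) (f : Fin k → L) (a t : L),
      nestTail sub (k + 1) (Fin.snoc f a : Fin (k + 1) → L) t = nestTail sub k f (sub a t) := by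
  intro k
  induction k with
  | zero =>
    intro f a t
    show sub ((Fin.snoc f a : Fin 1 → L) 0) t = sub a t
    have h0 : (0 : Fin 1) = Fin.last 0 := rfl
    rw [h0, Fin.snoc_last]
  | succ k ih =>
    intro f a t
    show sub ((Fin.snoc f a : Fin (k + 2) → L) 0)
        (nestTail sub (k + 1) (fun i => (Fin.snoc f a : Fin (k + 2) → L) i.succ) t)
      = sub (f 0) (nestTail sub k (fun i : Fin k => f i.succ) (sub a t))
    rw [snoc_succ_eq k f a, ih]
    have h0 : (0 : Fin (k + 2)) = Fin.castSucc (0 : Fin (k + 1)) := rfl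
    rw [h0, Fin.snoc_castSucc]

/-- Theorem 1*: under the dual axiom system 𝒜* and the bound `D` on lengths of
strictly decreasing chains in `M`, every `ψ : M → L` has a representation
`ψ = ⊟*(φ₁, ⊟*(φ₂, …, ⊟*(φ_k, φ_{k+1})…))` with all `φᵢ` monotone and `k ≤ D`. -/
theorem successive_approximation_A_dual
    {M L : Type*} [PartialOrder M] [PartialOrder L]
    (D : ℕ)
    (hChain : ∀ (k : ℕ) (c : Fin (k + 1) → M), StrictAnti c → k ≤ D)
    (boxplusS : Set L → L) (boxminusS : L → L → L) (circS : L → L)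
    (hA2a : ∀ (S : Set L), ∀ x ∈ S, boxplusS S ≤ x)
    (hA2b : ∀ S T : Set L, S ⊆ T → boxplusS T ≤ boxplusS S)
    (hA3a : ∀ l : L, boxminusS l (circS l) = l)
    (hA3b : Monotone circS)
    (hA4 : ∀ l' l : L, l' ≤ l → ∃ l'' : L, boxminusS l' l'' = l ∧ l'' ≤ circS l')
    (ψ : M → L) :
    ∃ k ≤ D, ∃ φ : Fin (k + 1) → (M → L),
      (∀ i, Monotone (φ i)) ∧
        ∀ x : M, ψ x = nestForm boxminusS k (fun i => φ i x) := by
  classical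
  -- the set of lengths of strictly decreasing chains ending at `x`
  set S : M → Set ℕ := fun x =>
    {k | ∃ c : Fin (k + 1) → M, StrictAnti c ∧ c (Fin.last k) = x} with hS
  have hS0 : ∀ x, 0 ∈ S x := by
    intro x
    refine ⟨fun _ => x, ?_, rfl⟩
    intro i j hij
    have hi := i.isLt
    have hj := j.isLt
    rw [Fin.lt_def] at hij
    omega
  have hSbdd : ∀ x, ∀ k ∈ S x, k ≤ D := by
    rintro x k ⟨c, hc, -⟩
    exact hChain k c hc
  -- rank of x : length of longest strictly decreasing chain ending at x
  set r : M → ℕ := fun x => sSup (S x) with hr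
  have hrD : ∀ x, r x ≤ D := fun x => csSup_le ⟨0, hS0 x⟩ (hSbdd x)
  have hrmem : ∀ x, r x ∈ S x := fun x =>
    Nat.sSup_mem ⟨0, hS0 x⟩ ⟨D, fun k hk => hSbdd x k hk⟩
  have hrlt : ∀ x y : M, x < y → r y < r x := by
    intro x y hxy
    obtain ⟨c, hc, hcl⟩ := hrmem y
    have hmem : r y + 1 ∈ S x := by
      refine ⟨(Fin.snoc c x : Fin (r y + 2) → M), ?_, ?_⟩
      · rw [Fin.strictAnti_iff_succ_lt]
        intro i
        refine Fin.lastCases ?_ (fun j => ?_) i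
        · have h1 : (Fin.last (r y)).succ = Fin.last (r y + 1) := rfl
          rw [h1, Fin.snoc_last, Fin.snoc_castSucc, hcl]
          exact hxy
        · have h1 : (Fin.castSucc j).succ = Fin.castSucc j.succ := (Fin.succ_castSucc j).symm
          rw [h1, Fin.snoc_castSucc, Fin.snoc_castSucc]
          exact hc (Fin.castSucc_lt_succ (i := j))
      · exact Fin.snoc_last _ _
    have hle := le_csSup (⟨D, fun k hk => hSbdd x k hk⟩ : BddAbove (S x)) hmem
    change r y + 1 ≤ r x at hle
    omega
  have hrle : ∀ x y : M, x ≤ y → r y ≤ r x := by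
    intro x y hxy
    rcases eq_or_lt_of_le hxy with h | h
    · rw [h]
    · exact (hrlt x y h).le
  -- one approximation step
  have step : ∀ ψj : M → L, ∃ φ ψ' : M → L,
      Monotone φ ∧ (∀ x, boxminusS (φ x) (ψ' x) = ψj x) ∧
      (∀ x, ψ' x ≤ circS (φ x)) ∧
      (∀ x, (∀ u v : M, x ≤ u → u ≤ v → ψj u ≤ ψj v) → ψ' x = circS (φ x)) := by
    intro ψj
    set Good : M → Prop := fun x => ∀ u v : M, x ≤ u → u ≤ v → ψj u ≤ ψj v with hGood
    set φ : M → L := fun x =>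
      if Good x then ψj x else boxplusS (ψj '' {y | x ≤ y}) with hφ
    have hGoodMono : ∀ x x' : M, x ≤ x' → Good x → Good x' := by
      intro x x' hxx' hg u v hu hv
      exact hg u v (le_trans hxx' hu) hv
    have hφpos : ∀ x, Good x → φ x = ψj x := by
      intro x hg
      show (if Good x then ψj x else _) = ψj x
      rw [if_pos hg]
    have hφneg : ∀ x, ¬ Good x → φ x = boxplusS (ψj '' {y | x ≤ y}) := by
      intro x hg
      show (if Good x then _ else boxplusS (ψj '' {y | x ≤ y})) = _
      rw [if_neg hg]
    have hφle : ∀ x, φ x ≤ ψj x := by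
      intro x
      by_cases hg : Good x
      · rw [hφpos x hg]
      · rw [hφneg x hg]
        exact hA2a _ (ψj x) ⟨x, le_refl x, rfl⟩
    have hφmono : Monotone φ := by
      intro x x' hxx'
      by_cases hg : Good x
      · have hg' : Good x' := hGoodMono x x' hxx' hg
        rw [hφpos x hg, hφpos x' hg']
        exact hg x x' (le_refl x) hxx'
      · by_cases hg' : Good x'
        · rw [hφneg x hg, hφpos x' hg']
          exact hA2a _ (ψj x') ⟨x', hxx', rfl⟩
        · rw [hφneg x hg, hφneg x' hg']
          refine hA2b _ _ ?_
          rintro l ⟨y, hy, rfl⟩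
          exact ⟨y, le_trans hxx' hy, rfl⟩
    set ψ' : M → L := fun x =>
      if Good x then circS (ψj x)
      else Classical.choose (hA4 (φ x) (ψj x) (hφle x)) with hψ'
    have hψ'pos : ∀ x, Good x → ψ' x = circS (ψj x) := by
      intro x hg
      show (if Good x then circS (ψj x) else _) = circS (ψj x)
      rw [if_pos hg]
    have hψ'neg : ∀ x, ¬ Good x →
        ψ' x = Classical.choose (hA4 (φ x) (ψj x) (hφle x)) := by
      intro x hg
      show (if Good x then _ else Classical.choose (hA4 (φ x) (ψj x) (hφle x))) = _
      rw [if_neg hg]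
    refine ⟨φ, ψ', hφmono, ?_, ?_, ?_⟩
    · intro x
      by_cases hg : Good x
      · rw [hψ'pos x hg, hφpos x hg]
        exact hA3a (ψj x)
      · rw [hψ'neg x hg]
        exact (Classical.choose_spec (hA4 (φ x) (ψj x) (hφle x))).1
    · intro x
      by_cases hg : Good x
      · rw [hψ'pos x hg, hφpos x hg]
      · rw [hψ'neg x hg]
        exact (Classical.choose_spec (hA4 (φ x) (ψj x) (hφle x))).2
    · intro x hg
      rw [hψ'pos x hg, hφpos x hg]
  -- main induction on the number of steps
  have main : ∀ j : ℕ, ∃ (Φ : Fin j → M → L) (ψj : M → L),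
      (∀ i, Monotone (Φ i)) ∧
      (∀ x y : M, r x ≤ j → x ≤ y → ψj x ≤ ψj y) ∧
      (∀ x, ψ x = nestTail boxminusS j (fun i => Φ i x) (ψj x)) := by
    intro j
    induction j with
    | zero =>
      refine ⟨Fin.elim0, ψ, fun i => i.elim0, ?_, fun x => rfl⟩
      intro x y hrx hxy
      rcases eq_or_lt_of_le hxy with h | h
      · rw [h]
      · exact absurd (hrlt x y h) (by omega)
    | succ j ih =>
      obtain ⟨Φ, ψj, hΦ, hmono, hrep⟩ := ih
      obtain ⟨φ, ψ', hφmono, hsub, hle, hgood⟩ := step ψj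
      refine ⟨(Fin.snoc Φ φ : Fin (j + 1) → M → L), ψ', ?_, ?_, ?_⟩
      · intro i
        refine Fin.lastCases ?_ (fun i => ?_) i
        · rw [Fin.snoc_last]; exact hφmono
        · rw [Fin.snoc_castSucc]; exact hΦ i
      · intro x y hrx hxy
        rcases eq_or_lt_of_le hxy with h | h
        · rw [h]
        · have hry : r y ≤ j := by have := hrlt x y h; omega
          have hgy : ∀ u v : M, y ≤ u → u ≤ v → ψj u ≤ ψj v := by
            intro u v hu hv
            exact hmono u v (le_trans (hrle y u hu) hry) hv
          calc ψ' x ≤ circS (φ x) := hle x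
            _ ≤ circS (φ y) := hA3b (hφmono hxy)
            _ = ψ' y := (hgood y hgy).symm
      · intro x
        have hsnoc : (fun i : Fin (j + 1) => (Fin.snoc Φ φ : Fin (j + 1) → M → L) i x)
            = (Fin.snoc (fun i => Φ i x) (φ x) : Fin (j + 1) → L) := by
          funext i
          refine Fin.lastCases ?_ (fun i => ?_) i
          · rw [Fin.snoc_last, Fin.snoc_last]
          · rw [Fin.snoc_castSucc, Fin.snoc_castSucc]
        rw [hsnoc, nestTail_snoc, hsub, hrep]
  obtain ⟨Φ, ψD, hΦ, hmono, hrep⟩ := main D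
  refine ⟨D, le_refl D, (Fin.snoc Φ ψD : Fin (D + 1) → M → L), ?_, ?_⟩
  · intro i
    refine Fin.lastCases ?_ (fun i => ?_) i
    · rw [Fin.snoc_last]
      intro x y hxy
      exact hmono x y (hrD x) hxy
    · rw [Fin.snoc_castSucc]; exact hΦ i
  · intro x
    have hsnoc : (fun i : Fin (D + 1) => (Fin.snoc Φ ψD : Fin (D + 1) → M → L) i x)
        = (Fin.snoc (fun i => Φ i x) (ψD x) : Fin (D + 1) → L) := by
      funext i
      refine Fin.lastCases ?_ (fun i => ?_) i
      · rw [Fin.snoc_last, Fin.snoc_last]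
      · rw [Fin.snoc_castSucc, Fin.snoc_castSucc]
    rw [hsnoc, nestForm_snoc, hrep]
end

section
/- Let (M,≤_M) and (L,≤_L) be partially ordered sets, let D be a natural number such that every strictly decreasing chain m_0 >_M m_1 >_M … >_M m_k in M has k ≤ D, assume every strictly decreasing chain in L is finite, and let ⊎*: L × L → L, ⊟*: L × L → L, ⊚*: L → L satisfy the dual axiom system ℬ*. Then for every function ψ: M → L there exist a natural number k ≤ D and monotone functions φ_1, …, φ_{k+1}: M → L such that for all x ∈ M, ψ(x) = ⊟*(φ_1(x), ⊟*(φ_2(x), …, ⊟*(φ_k(x), φ_{k+1}(x))…)); in particular the number of occurrences of ⊟* is at most D. -/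
section SuccApproxAux

variable {M L : Type*} [PartialOrder M] [PartialOrder L]

/-- Using `⊎*` and well-foundedness of `<` on `L`, every nonempty subset of `L`
has a lower bound. -/
lemma saB_exists_lb (hLChain : ∀ f : ℕ → L, ¬StrictAnti f)
    (joinS : L → L → L) (hB2 : ∀ x y : L, joinS x y ≤ x ∧ joinS x y ≤ y)
    (S : Set L) (hS : S.Nonempty) : ∃ l : L, ∀ s ∈ S, l ≤ s := by
  by_contra h
  push_neg at h
  choose g hgS hgle using h
  have hlt : ∀ l : L, joinS l (g l) < l := by
    intro l
    refine lt_of_le_of_ne (hB2 l (g l)).1 ?_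
    intro he
    exact hgle l (he.symm.le.trans (hB2 l (g l)).2)
  have : StrictAnti (fun n => (fun l => joinS l (g l))^[n] hS.choose) := by
    refine strictAnti_nat_of_succ_lt fun n => ?_
    rw [Function.iterate_succ_apply']
    exact hlt _
  exact hLChain _ this

/-- A choice of lower bound for each subset of `L`. -/
noncomputable def saB_lb [Nonempty L] (hLChain : ∀ f : ℕ → L, ¬StrictAnti f)
    (joinS : L → L → L) (hB2 : ∀ x y : L, joinS x y ≤ x ∧ joinS x y ≤ y)
    (S : Set L) : L :=
  letI := Classical.dec S.Nonempty
  if h : S.Nonempty then (saB_exists_lb hLChain joinS hB2 S h).choose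
  else Classical.arbitrary L

lemma saB_lb_le [Nonempty L] (hLChain : ∀ f : ℕ → L, ¬StrictAnti f)
    (joinS : L → L → L) (hB2 : ∀ x y : L, joinS x y ≤ x ∧ joinS x y ≤ y)
    (S : Set L) (s : L) (hs : s ∈ S) :
    saB_lb hLChain joinS hB2 S ≤ s := by
  simp only [saB_lb]
  rw [dif_pos ⟨s, hs⟩]
  exact (saB_exists_lb hLChain joinS hB2 S ⟨s, hs⟩).choose_spec s hs

/-- The reverse order on `M` is well-founded when strictly decreasing chains have
bounded length. -/
lemma saB_wf (D : ℕ) (hChain : ∀ (k : ℕ) (c : Fin (k + 1) → M), StrictAnti c → k ≤ D) :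
    WellFounded (fun a b : M => b < a) := by
  rw [RelEmbedding.wellFounded_iff_isEmpty]
  constructor
  intro f
  have hf : ∀ a b : ℕ, a > b → f b < f a := fun a b h => f.map_rel_iff.mpr h
  have hsm : StrictMono fun n => f n := fun a b h => hf b a h
  have hc : StrictAnti fun i : Fin (D + 2) => f (D + 1 - (i : ℕ)) := by
    intro i j hij
    rw [Fin.lt_def] at hij
    have hj := j.isLt
    exact hsm (by omega)
  exact absurd (hChain (D + 1) _ hc) (by omega)

/-- Lengths of strictly increasing chains above `x` (recorded as strictly
decreasing chains ending at `x`). -/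
def saB_chainSet (x : M) : Set ℕ :=
  {k | ∃ c : Fin (k + 1) → M, StrictAnti c ∧ c (Fin.last k) = x}

lemma saB_zero_mem (x : M) : 0 ∈ saB_chainSet x := by
  refine ⟨fun _ => x, ?_, rfl⟩
  intro a b hab
  rw [Fin.lt_def] at hab
  have := a.isLt
  have := b.isLt
  omega

lemma saB_bdd (D : ℕ) (hChain : ∀ (k : ℕ) (c : Fin (k + 1) → M), StrictAnti c → k ≤ D)
    (x : M) : BddAbove (saB_chainSet x) := by
  refine ⟨D, fun k hk => ?_⟩
  obtain ⟨c, hc, -⟩ := hk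
  exact hChain k c hc

/-- The co-rank: the length of a longest strictly increasing chain above `x`. -/
noncomputable def saB_rk (x : M) : ℕ := sSup (saB_chainSet x)

lemma saB_rk_le (D : ℕ) (hChain : ∀ (k : ℕ) (c : Fin (k + 1) → M), StrictAnti c → k ≤ D)
    (x : M) : saB_rk x ≤ D := by
  refine csSup_le ⟨0, saB_zero_mem x⟩ fun k hk => ?_
  obtain ⟨c, hc, -⟩ := hk
  exact hChain k c hc

lemma saB_rk_lt (D : ℕ) (hChain : ∀ (k : ℕ) (c : Fin (k + 1) → M), StrictAnti c → k ≤ D)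
    {a b : M} (hab : a < b) : saB_rk b < saB_rk a := by
  have hmem' : saB_rk b ∈ saB_chainSet b :=
    Nat.sSup_mem ⟨0, saB_zero_mem b⟩ (saB_bdd D hChain b)
  obtain ⟨c, hc, hlast⟩ := hmem'
  have hmem : saB_rk b + 1 ∈ saB_chainSet a := by
    refine ⟨fun i => if hi : (i : ℕ) < saB_rk b + 1 then c ⟨i, hi⟩ else a, ?_, ?_⟩
    · intro i j hij
      rw [Fin.lt_def] at hij
      by_cases hj : (j : ℕ) < saB_rk b + 1
      · have hi : (i : ℕ) < saB_rk b + 1 := lt_trans hij hj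
        simp only [dif_pos hi, dif_pos hj]
        exact hc (Fin.mk_lt_mk.mpr hij)
      · have hi : (i : ℕ) < saB_rk b + 1 := by have := j.isLt; omega
        simp only [dif_pos hi, dif_neg hj]
        have h1 : c (Fin.last (saB_rk b)) ≤ c ⟨i, hi⟩ := hc.antitone (Fin.le_last _)
        rw [hlast] at h1
        exact lt_of_lt_of_le hab h1
    · have hni : ¬ ((Fin.last (saB_rk b + 1) : Fin (saB_rk b + 2)) : ℕ) < saB_rk b + 1 := by
        simp [Fin.last]
      simp only [dif_neg hni]
  have h2 : saB_rk b + 1 ≤ saB_rk a := le_csSup (saB_bdd D hChain a) hmem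
  omega

/-- The monotone minorant of `g` agreeing with `g` on co-rank `≤ j`. -/
noncomputable def saB_build (wf : WellFounded (fun a b : M => b < a)) (u : M → ℕ)
    (lbf : Set L → L) (j : ℕ) (g : M → L) : M → L :=
  wf.fix (C := fun _ => L)
    (fun x ih =>
      if u x ≤ j then g x
      else lbf ({l | ∃ y, ∃ h : x < y, ih y h = l} ∪ {g x}))

lemma saB_build_eq (wf : WellFounded (fun a b : M => b < a)) (u : M → ℕ)
    (lbf : Set L → L) (j : ℕ) (g : M → L) (x : M) :
    saB_build wf u lbf j g x
      = (if u x ≤ j then g x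
          else lbf ({l | ∃ y, ∃ _ : x < y, saB_build wf u lbf j g y = l} ∪ {g x})) :=
  WellFounded.fix_eq _ _ _

lemma saB_build_of_le (wf : WellFounded (fun a b : M => b < a)) (u : M → ℕ)
    (lbf : Set L → L) (j : ℕ) (g : M → L) {x : M} (h : u x ≤ j) :
    saB_build wf u lbf j g x = g x := by
  rw [saB_build_eq, if_pos h]

lemma saB_build_le (wf : WellFounded (fun a b : M => b < a)) (u : M → ℕ)
    (lbf : Set L → L) (hlb : ∀ (S : Set L) (s : L), s ∈ S → lbf S ≤ s)
    (j : ℕ) (g : M → L) (x : M) :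
    saB_build wf u lbf j g x ≤ g x := by
  rw [saB_build_eq]
  split_ifs with h
  · exact le_rfl
  · exact hlb _ _ (Or.inr rfl)

lemma saB_build_mono (wf : WellFounded (fun a b : M => b < a)) (u : M → ℕ)
    (lbf : Set L → L) (hlb : ∀ (S : Set L) (s : L), s ∈ S → lbf S ≤ s)
    (hu : ∀ a b : M, a < b → u b < u a) (j : ℕ) (g : M → L)
    (hkey : ∀ a b : M, a < b → u a ≤ j → g a ≤ g b) :
    Monotone (saB_build wf u lbf j g) := by
  intro x y hxy
  rcases eq_or_lt_of_le hxy with rfl | h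
  · exact le_rfl
  · by_cases hx : u x ≤ j
    · rw [saB_build_of_le wf u lbf j g hx,
        saB_build_of_le wf u lbf j g (le_of_lt (lt_of_lt_of_le (hu x y h) hx))]
      exact hkey x y h hx
    · rw [saB_build_eq wf u lbf j g x, if_neg hx]
      exact hlb _ _ (Or.inl ⟨y, h, rfl⟩)

/-- The successive remainders `ψ_j`. -/
noncomputable def saB_stage (wf : WellFounded (fun a b : M => b < a)) (u : M → ℕ)
    (lbf : Set L → L) (hlb : ∀ (S : Set L) (s : L), s ∈ S → lbf S ≤ s)
    (boxminusS : L → L → L) (circS : L → L)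
    (hB4 : ∀ l' l : L, l' ≤ l → ∃ l'' : L, boxminusS l' l'' = l ∧ l'' ≤ circS l')
    (ψ : M → L) : ℕ → M → L
  | 0 => ψ
  | j + 1 => fun x =>
      if u x ≤ j then
        circS (saB_build wf u lbf j (saB_stage wf u lbf hlb boxminusS circS hB4 ψ j) x)
      else
        (hB4 (saB_build wf u lbf j (saB_stage wf u lbf hlb boxminusS circS hB4 ψ j) x)
          (saB_stage wf u lbf hlb boxminusS circS hB4 ψ j x)
          (saB_build_le wf u lbf hlb j
            (saB_stage wf u lbf hlb boxminusS circS hB4 ψ j) x)).choose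

lemma saB_stage_link (wf : WellFounded (fun a b : M => b < a)) (u : M → ℕ)
    (lbf : Set L → L) (hlb : ∀ (S : Set L) (s : L), s ∈ S → lbf S ≤ s)
    (boxminusS : L → L → L) (circS : L → L)
    (hB4 : ∀ l' l : L, l' ≤ l → ∃ l'' : L, boxminusS l' l'' = l ∧ l'' ≤ circS l')
    (hB3a : ∀ l : L, boxminusS l (circS l) = l)
    (ψ : M → L) (j : ℕ) (x : M) :
    boxminusS (saB_build wf u lbf j (saB_stage wf u lbf hlb boxminusS circS hB4 ψ j) x)
        (saB_stage wf u lbf hlb boxminusS circS hB4 ψ (j + 1) x)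
      = saB_stage wf u lbf hlb boxminusS circS hB4 ψ j x := by
  by_cases h : u x ≤ j
  · simp only [saB_stage, if_pos h]
    rw [hB3a, saB_build_of_le wf u lbf j _ h]
  · simp only [saB_stage, if_neg h]
    exact (hB4 _ _ (saB_build_le wf u lbf hlb j
      (saB_stage wf u lbf hlb boxminusS circS hB4 ψ j) x)).choose_spec.1

lemma saB_stage_inv (wf : WellFounded (fun a b : M => b < a)) (u : M → ℕ)
    (lbf : Set L → L) (hlb : ∀ (S : Set L) (s : L), s ∈ S → lbf S ≤ s)
    (boxminusS : L → L → L) (circS : L → L)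
    (hB4 : ∀ l' l : L, l' ≤ l → ∃ l'' : L, boxminusS l' l'' = l ∧ l'' ≤ circS l')
    (hB3b : Monotone circS)
    (hu : ∀ a b : M, a < b → u b < u a) (ψ : M → L) (j : ℕ) :
    ∃ μ : M → L, Monotone μ ∧
      (∀ x, u x < j → saB_stage wf u lbf hlb boxminusS circS hB4 ψ j x = μ x) ∧
      (∀ x, u x ≤ j → saB_stage wf u lbf hlb boxminusS circS hB4 ψ j x ≤ μ x) := by
  induction j with
  | zero =>
    refine ⟨saB_build wf u lbf 0 (saB_stage wf u lbf hlb boxminusS circS hB4 ψ 0),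
      saB_build_mono wf u lbf hlb hu 0 _ ?_, fun x hx => absurd hx (by omega),
      fun x hx => (saB_build_of_le wf u lbf 0 _ hx).ge⟩
    intro a b hab ha
    exact absurd (hu a b hab) (by omega)
  | succ j ih =>
    obtain ⟨μ, hμm, h1, h2⟩ := ih
    have hkey : ∀ a b : M, a < b → u a ≤ j →
        saB_stage wf u lbf hlb boxminusS circS hB4 ψ j a
          ≤ saB_stage wf u lbf hlb boxminusS circS hB4 ψ j b := by
      intro a b hab ha
      have hb : u b < j := lt_of_lt_of_le (hu a b hab) ha
      calc saB_stage wf u lbf hlb boxminusS circS hB4 ψ j a ≤ μ a := h2 a ha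
        _ ≤ μ b := hμm (le_of_lt hab)
        _ = saB_stage wf u lbf hlb boxminusS circS hB4 ψ j b := (h1 b hb).symm
    have hbm : Monotone (saB_build wf u lbf j
        (saB_stage wf u lbf hlb boxminusS circS hB4 ψ j)) :=
      saB_build_mono wf u lbf hlb hu j _ hkey
    refine ⟨fun x => circS (saB_build wf u lbf j
        (saB_stage wf u lbf hlb boxminusS circS hB4 ψ j) x),
      hB3b.comp hbm, ?_, ?_⟩
    · intro x hx
      have hx' : u x ≤ j := by omega
      simp only [saB_stage, if_pos hx']
    · intro x _
      by_cases hx : u x ≤ j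
      · simp only [saB_stage, if_pos hx]
        exact le_rfl
      · simp only [saB_stage, if_neg hx]
        exact (hB4 _ _ (saB_build_le wf u lbf hlb j
          (saB_stage wf u lbf hlb boxminusS circS hB4 ψ j) x)).choose_spec.2

lemma saB_stage_key (wf : WellFounded (fun a b : M => b < a)) (u : M → ℕ)
    (lbf : Set L → L) (hlb : ∀ (S : Set L) (s : L), s ∈ S → lbf S ≤ s)
    (boxminusS : L → L → L) (circS : L → L)
    (hB4 : ∀ l' l : L, l' ≤ l → ∃ l'' : L, boxminusS l' l'' = l ∧ l'' ≤ circS l')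
    (hB3b : Monotone circS)
    (hu : ∀ a b : M, a < b → u b < u a) (ψ : M → L) (j : ℕ) :
    ∀ a b : M, a < b → u a ≤ j →
      saB_stage wf u lbf hlb boxminusS circS hB4 ψ j a
        ≤ saB_stage wf u lbf hlb boxminusS circS hB4 ψ j b := by
  obtain ⟨μ, hμm, h1, h2⟩ :=
    saB_stage_inv wf u lbf hlb boxminusS circS hB4 hB3b hu ψ j
  intro a b hab ha
  have hb : u b < j := lt_of_lt_of_le (hu a b hab) ha
  calc saB_stage wf u lbf hlb boxminusS circS hB4 ψ j a ≤ μ a := h2 a ha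
    _ ≤ μ b := hμm (le_of_lt hab)
    _ = saB_stage wf u lbf hlb boxminusS circS hB4 ψ j b := (h1 b hb).symm

lemma saB_nest_aux (boxminusS : L → L → L) :
    ∀ (k : ℕ) (g h : ℕ → L), (∀ j, g j = boxminusS (h j) (g (j + 1))) →
      g 0 = nestForm boxminusS k (fun i => if (i : ℕ) = k then g k else h (i : ℕ)) := by
  intro k
  induction k with
  | zero => intro g h _; simp [nestForm]
  | succ k ih =>
    intro g h hrel
    have h1 : g 1 = nestForm boxminusS k
        (fun i => if (i : ℕ) = k then g (k + 1) else h ((i : ℕ) + 1)) :=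
      ih (fun j => g (j + 1)) (fun j => h (j + 1)) (fun j => hrel (j + 1))
    simp only [nestForm]
    rw [hrel 0, h1]
    congr 1
    congr 1
    funext i
    simp only [Fin.val_succ]
    by_cases hik : (i : ℕ) = k
    · simp [hik]
    · rw [if_neg hik, if_neg (by omega)]

end SuccApproxAux

/-- Theorem 3*: under the dual axiom system ℬ*, the bound `D` on lengths of
strictly decreasing chains in `M`, and finiteness of all strictly decreasing chains
in `L`, every `ψ : M → L` has a representation
`ψ = ⊟*(φ₁, ⊟*(φ₂, …, ⊟*(φ_k, φ_{k+1})…))` with all `φᵢ` monotone and `k ≤ D`. -/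
theorem successive_approximation_B_dual
    {M L : Type*} [PartialOrder M] [PartialOrder L]
    (D : ℕ)
    (hChain : ∀ (k : ℕ) (c : Fin (k + 1) → M), StrictAnti c → k ≤ D)
    (hLChain : ∀ f : ℕ → L, ¬StrictAnti f)
    (joinS : L → L → L) (boxminusS : L → L → L) (circS : L → L)
    (hB2 : ∀ x y : L, joinS x y ≤ x ∧ joinS x y ≤ y)
    (hB3a : ∀ l : L, boxminusS l (circS l) = l)
    (hB3b : Monotone circS)
    (hB4 : ∀ l' l : L, l' ≤ l → ∃ l'' : L, boxminusS l' l'' = l ∧ l'' ≤ circS l')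
    (ψ : M → L) :
    ∃ k ≤ D, ∃ φ : Fin (k + 1) → (M → L),
      (∀ i, Monotone (φ i)) ∧
        ∀ x : M, ψ x = nestForm boxminusS k (fun i => φ i x) := by
  rcases isEmpty_or_nonempty M with hM | hM
  · refine ⟨0, Nat.zero_le D, fun _ x => (IsEmpty.false x).elim, ?_, ?_⟩
    · intro i a
      exact (IsEmpty.false a).elim
    · intro x
      exact (IsEmpty.false x).elim
  · have hL : Nonempty L := ⟨ψ (Classical.arbitrary M)⟩
    have wf : WellFounded (fun a b : M => b < a) := saB_wf D hChain
    have hu : ∀ a b : M, a < b → saB_rk b < saB_rk a :=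
      fun a b hab => saB_rk_lt D hChain hab
    have huD : ∀ x : M, saB_rk x ≤ D := saB_rk_le D hChain
    have hlb : ∀ (S : Set L) (s : L), s ∈ S → saB_lb hLChain joinS hB2 S ≤ s :=
      fun S s hs => saB_lb_le hLChain joinS hB2 S s hs
    set lbf : Set L → L := saB_lb hLChain joinS hB2 with hlbf_def
    have key := saB_stage_key wf saB_rk lbf hlb boxminusS circS hB4 hB3b hu ψ
    have monoD : Monotone (saB_stage wf saB_rk lbf hlb boxminusS circS hB4 ψ D) := by
      intro x y hxy
      rcases eq_or_lt_of_le hxy with rfl | h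
      · exact le_rfl
      · exact key D x y h (huD x)
    refine ⟨D, le_rfl, fun i x =>
      if (i : ℕ) = D then saB_stage wf saB_rk lbf hlb boxminusS circS hB4 ψ D x
      else saB_build wf saB_rk lbf (i : ℕ)
        (saB_stage wf saB_rk lbf hlb boxminusS circS hB4 ψ (i : ℕ)) x, ?_, ?_⟩
    · intro i
      by_cases hi : (i : ℕ) = D
      · simp only [if_pos hi]
        exact monoD
      · simp only [if_neg hi]
        exact saB_build_mono wf saB_rk lbf hlb hu (i : ℕ) _ (key (i : ℕ))
    · intro x
      have hrel : ∀ j : ℕ, saB_stage wf saB_rk lbf hlb boxminusS circS hB4 ψ j x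
          = boxminusS (saB_build wf saB_rk lbf j
              (saB_stage wf saB_rk lbf hlb boxminusS circS hB4 ψ j) x)
            (saB_stage wf saB_rk lbf hlb boxminusS circS hB4 ψ (j + 1) x) :=
        fun j => (saB_stage_link wf saB_rk lbf hlb boxminusS circS hB4 hB3a ψ j x).symm
      have h0 := saB_nest_aux boxminusS D
        (fun j => saB_stage wf saB_rk lbf hlb boxminusS circS hB4 ψ j x)
        (fun j => saB_build wf saB_rk lbf j
          (saB_stage wf saB_rk lbf hlb boxminusS circS hB4 ψ j) x) hrel
      simpa only [saB_stage] using h0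
end

section
/- Every Boolean function f: Bool^n → Bool can be represented by a Boolean approximating form: there exist a natural number k ≤ n and monotone Boolean functions P_1, …, P_{k+1}: Bool^n → Bool such that for all x ∈ Bool^n, f(x) = P_1(x) ∧ ¬(P_2(x) ∧ ¬(P_3(x) ∧ … ∧ ¬(P_k(x) ∧ ¬P_{k+1}(x))…)). -/
private def wt {n : ℕ} (x : Fin n → Bool) : ℕ :=
  (Finset.univ.filter fun i => x i = true).card

private lemma wt_le {n : ℕ} (x : Fin n → Bool) : wt x ≤ n := by
  simpa [wt] using (Finset.card_filter_le Finset.univ fun i => x i = true)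

private lemma wt_lt_of_lt {n : ℕ} {x y : Fin n → Bool} (hle : y ≤ x) (hne : y ≠ x) :
    wt y < wt x := by
  apply Finset.card_lt_card
  constructor
  · intro i hi
    simp only [Finset.mem_filter, Finset.mem_univ, true_and] at hi ⊢
    exact Bool.le_iff_imp.mp (hle i) hi
  · intro hsub
    apply hne
    funext i
    cases hy : y i
    · cases hx : x i
      · rfl
      · have : i ∈ Finset.univ.filter fun j => y j = true :=
          hsub (by simp [hx])
        simp [hy] at this
    · exact (Bool.le_iff_imp.mp (hle i) hy).symm

private lemma key (n : ℕ) : ∀ m (f : (Fin n → Bool) → Bool),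
    (∀ x, f x = true → n ≤ wt x + m) →
    ∃ k ≤ m, ∃ P : Fin (k + 1) → (Fin n → Bool) → Bool,
      (∀ i, Monotone (P i)) ∧
        ∀ x, f x = nestForm (fun a b => a && !b) k (fun i => P i x) := by
  intro m
  induction m with
  | zero =>
    intro f hf
    refine ⟨0, le_refl 0, fun _ => f, ?_, fun x => rfl⟩
    intro _ x y hxy
    rw [Bool.le_iff_imp]
    intro hx
    have hwt : wt x = n := le_antisymm (wt_le x) (by simpa using hf x hx)
    -- x = top, hence y = x
    have hx_top : ∀ i, x i = true := by
      intro i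
      by_contra hi
      have : wt x < n := by
        have : (Finset.univ.filter fun j => x j = true) ⊂ Finset.univ := by
          refine Finset.ssubset_univ_iff.mpr fun h => hi ?_
          have hi' : i ∈ Finset.univ.filter fun j => x j = true := by
            rw [h]; exact Finset.mem_univ i
          exact (Finset.mem_filter.mp hi').2
        simpa [wt] using Finset.card_lt_card this
      omega
    have hxy' : x = y := by
      funext i
      have := hxy i
      rw [hx_top i] at this ⊢
      exact (Bool.le_iff_imp.mp this rfl).symm
    rw [← hxy']; exact hx
  | succ m ih =>
    intro f hf
    classical
    set g : (Fin n → Bool) → Bool := fun x => decide (∃ y, y ≤ x ∧ f y = true) with hg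
    have hgmono : Monotone g := by
      intro x x' hle
      rw [Bool.le_iff_imp]
      simp only [hg, decide_eq_true_iff]
      rintro ⟨y, hy, hfy⟩
      exact ⟨y, le_trans hy hle, hfy⟩
    have hfg : ∀ x, f x = true → g x = true := by
      intro x hx
      simp only [hg, decide_eq_true_iff]
      exact ⟨x, le_refl x, hx⟩
    set h : (Fin n → Bool) → Bool := fun x => g x && !(f x) with hh
    have hhbound : ∀ x, h x = true → n ≤ wt x + m := by
      intro x hx
      simp only [hh, Bool.and_eq_true, Bool.not_eq_true'] at hx
      obtain ⟨hgx, hfx⟩ := hx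
      simp only [hg, decide_eq_true_iff] at hgx
      obtain ⟨y, hyx, hfy⟩ := hgx
      have hne : y ≠ x := fun e => by rw [e, hfx] at hfy; exact Bool.false_ne_true hfy
      have h1 := hf y hfy
      have h2 := wt_lt_of_lt hyx hne
      omega
    obtain ⟨k, hk, Q, hQmono, hQeq⟩ := ih h hhbound
    refine ⟨k + 1, by omega, Fin.cons g Q, ?_, ?_⟩
    · intro i
      refine Fin.cases ?_ ?_ i
      · simpa using hgmono
      · intro j; simpa using hQmono j
    · intro x
      have step : nestForm (fun a b => a && !b) (k + 1)
            (fun i => (Fin.cons g Q : Fin (k + 1 + 1) → (Fin n → Bool) → Bool) i x)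
          = (g x && !(nestForm (fun a b => a && !b) k fun i => Q i x)) := by
        simp [nestForm, Fin.cons_succ]
      rw [step, ← hQeq x]
      cases hfx : f x
      · simp only [hh, hfx]
        cases hgx : g x <;> simp
      · simp [hh, hfx, hfg x hfx]

/-- Corollary: every Boolean function `f : Bool^n → Bool` is representable by a
Boolean approximating form
`f = P₁ ∧ ¬(P₂ ∧ ¬(P₃ ∧ … ∧ ¬(P_k ∧ ¬P_{k+1})…))`
with `k ≤ n` and all `Pᵢ` monotone (w.r.t. the componentwise order on `Bool^n`). -/
theorem boolean_approximating_form
    (n : ℕ) (f : (Fin n → Bool) → Bool) :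
    ∃ k ≤ n, ∃ P : Fin (k + 1) → (Fin n → Bool) → Bool,
      (∀ i, Monotone (P i)) ∧
        ∀ x : Fin n → Bool, f x = nestForm (fun a b => a && !b) k (fun i => P i x) := by
  exact key n n f fun x _ => by have := wt_le x; omega
end
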